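/- Let α ∈ (1, 2). There exists θ₀ ∈ (π/2, π) such that for every θ ∈ (π/2, θ₀) there is a constant c > 0, independent of τ and z, with the property: for every time step τ > 0 and every z ∈ D(τ,θ) one has δ_τ(e^{−zτ}) ≠ 0 and |δ_τ(e^{−zτ})^α − z^α| ≤ c τ² |z|^{2+α}, where δ_τ is the BDF2 generating symbol and powers are principal complex powers. -/

import Mathlib

open Complex Set

/-- The BDF2 generating symbol `δ_τ(ξ) = τ⁻¹(3/2 − 2ξ + ξ²/2)`. -/
noncomputable def bdf2 (τ : ℝ) (ξ : ℂ) : ℂ :=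
  (τ : ℂ)⁻¹ * (3 / 2 - 2 * ξ + ξ ^ 2 / 2)

/-- The region `D(τ,θ)`: nonzero `z` with either `|arg z| = θ` and `|Im z| ≤ π/τ`,
or `|z| ≤ 1/τ` and `|arg z| ≤ θ`. -/
def Dset (τ θ : ℝ) : Set ℂ :=
  {z : ℂ | z ≠ 0 ∧
    ((|z.arg| = θ ∧ |z.im| ≤ Real.pi / τ) ∨ (‖z‖ ≤ 1 / τ ∧ |z.arg| ≤ θ))}


/-- Auxiliary symbol `F(w) = δ₁(e^{-w})`. -/
noncomputable def Fsym (w : ℂ) : ℂ :=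
  3 / 2 - 2 * Complex.exp (-w) + (Complex.exp (-w)) ^ 2 / 2

lemma cubic {w : ℂ} (hw : ‖w‖ ≤ 1 / 2) :
    ‖Fsym w - w‖ ≤ 4 / 3 * ‖w‖ ^ 3 := by
  have h1 : ‖-w‖ ≤ 1 := by simpa using hw.trans (by norm_num)
  have h2 : ‖-2 * w‖ ≤ 1 := by
    rw [norm_mul]
    simpa using by nlinarith [norm_nonneg w]
  have e1 := Complex.exp_bound h1 (n := 3) (by norm_num)
  have e2 := Complex.exp_bound h2 (n := 3) (by norm_num)
  have s1 : (∑ m ∈ Finset.range 3, (-w) ^ m / m.factorial) = 1 + (-w) + w ^ 2 / 2 := by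
    simp [Finset.sum_range_succ, Nat.factorial]
  have s2 : (∑ m ∈ Finset.range 3, (-2 * w) ^ m / m.factorial) = 1 + (-2 * w) + 2 * w ^ 2 := by
    simp [Finset.sum_range_succ, Nat.factorial]
    ring
  rw [s1] at e1
  rw [s2] at e2
  norm_num [norm_neg, norm_mul, Nat.factorial] at e1 e2
  have hsq : Complex.exp (-w) ^ 2 = Complex.exp (-2 * w) := by
    rw [sq, ← Complex.exp_add]; ring_nf
  have key : Fsym w - w =
      (-2) * (Complex.exp (-w) - (1 + (-w) + w ^ 2 / 2)) +
        (1 / 2) * (Complex.exp (-2 * w) - (1 + (-2 * w) + 2 * w ^ 2)) := by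
    rw [Fsym, hsq]; ring
  rw [key]
  have hb := norm_add_le ((-2) * (Complex.exp (-w) - (1 + (-w) + w ^ 2 / 2)))
    ((1 / 2) * (Complex.exp (-2 * w) - (1 + (-2 * w) + 2 * w ^ 2)))
  rw [norm_mul, norm_mul] at hb
  have hn2 : ‖(-2 : ℂ)‖ = 2 := by simp
  have hhalf : ‖(1 / 2 : ℂ)‖ = 1 / 2 := by norm_num
  rw [hn2, hhalf] at hb
  ring_nf at e1 e2 hb ⊢
  nlinarith [norm_nonneg w]

lemma arg_one_add_le {h : ℂ} (hh : ‖h‖ ≤ 1 / 3) :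
    |(1 + h).arg| ≤ Real.pi / 4 := by
  have hre : (0:ℝ) ≤ (1 + h).re := by
    have := abs_le.mp ((Complex.abs_re_le_norm h).trans hh)
    simp only [Complex.add_re, Complex.one_re]
    linarith [this.1]
  have habs : (2:ℝ)/3 ≤ ‖1 + h‖ := by
    have h1 := norm_add_le (1 + h) (-h)
    have e : (1 + h) + -h = 1 := by ring
    rw [e, norm_neg, norm_one] at h1
    linarith
  have hpi2 : |(1 + h).arg| ≤ Real.pi / 2 := Complex.abs_arg_le_pi_div_two_iff.mpr hre
  by_contra hc
  push_neg at hc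
  have hsin : Real.sin (Real.pi / 4) < Real.sin |(1 + h).arg| := by
    apply Real.strictMonoOn_sin _ _ hc
    · constructor <;> [linarith [Real.pi_pos]; linarith [Real.pi_pos]]
    · exact ⟨by linarith [abs_nonneg (1+h).arg, Real.pi_pos], hpi2⟩
  have hs := Complex.sin_arg (1 + h)
  have him : |(1 + h).im| ≤ 1/3 := by
    simp only [Complex.add_im, Complex.one_im, zero_add]
    exact (Complex.abs_im_le_norm h).trans hh
  have hq : |Real.sin ((1 + h).arg)| ≤ 1/2 := by
    rw [hs, abs_div, _root_.abs_of_nonneg (norm_nonneg _), div_le_iff₀ (by linarith)]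
    nlinarith
  have hq2 : Real.sin |(1 + h).arg| ≤ 1/2 := by
    rcases le_or_gt 0 ((1 + h).arg) with hpos | hneg
    · rw [_root_.abs_of_nonneg hpos]; exact (le_abs_self _).trans hq
    · rw [_root_.abs_of_neg hneg, Real.sin_neg]; exact (neg_le_abs _).trans hq
  rw [Real.sin_pi_div_four] at hsin
  nlinarith [Real.sq_sqrt (show (0:ℝ) ≤ 2 by norm_num), Real.sqrt_nonneg 2]

lemma est {α : ℝ} (hα : α ∈ Set.Ioo (1:ℝ) 2) {w : ℂ} (hw : w ≠ 0)
    (h5 : ‖w‖ ≤ 5) (harg : |w.arg| < 3 * Real.pi / 4) (hF : Fsym w ≠ 0) :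
    ‖(Fsym w ^ (α:ℂ) - w ^ (α:ℂ))‖ ≤
      (16 * (Real.exp 11 ^ 2 + 25)) * ‖w‖ ^ (2 + α) := by
  obtain ⟨hα1, hα2⟩ := hα
  have habsw : 0 < ‖w‖ := norm_pos_iff.mpr hw
  have hC26 : (1:ℝ) ≤ Real.exp 11 := by
    nlinarith [Real.exp_pos (11:ℝ), Real.add_one_le_exp (11:ℝ)]
  rcases le_or_gt (‖w‖) (1/2) with hsm | hlg
  · -- small case
    set h : ℂ := Fsym w / w - 1 with hh_def
    have hFw : Fsym w = w * (1 + h) := by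
      field_simp [hh_def]
      have hhw : h * w = Fsym w - w := by rw [hh_def, sub_mul, div_mul_cancel₀ _ hw, one_mul]
      linear_combination -hhw
    have hh_eq : h = (Fsym w - w) / w := by
      field_simp [hh_def]
      rw [hh_def, sub_mul, div_mul_cancel₀ _ hw, one_mul]
    have hhabs : ‖h‖ ≤ 4/3 * ‖w‖ ^ 2 := by
      rw [hh_eq, norm_div]
      rw [div_le_iff₀ habsw]
      calc ‖Fsym w - w‖ ≤ 4/3 * ‖w‖ ^ 3 := cubic hsm
        _ = 4/3 * ‖w‖ ^ 2 * ‖w‖ := by ring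
    have hh13 : ‖h‖ ≤ 1/3 := by nlinarith
    have h1ne : (1 + h) ≠ 0 := by
      intro hz
      have : ‖1 + h‖ = 0 := by rw [hz]; simp
      have h1 := norm_add_le (1 + h) (-h)
      have e : (1 + h) + -h = 1 := by ring
      rw [e, norm_neg, norm_one, this] at h1
      linarith
    -- log of product
    have hargsum : w.arg + (1 + h).arg ∈ Set.Ioc (-Real.pi) Real.pi := by
      have h1 := arg_one_add_le hh13
      have h2 := abs_le.mp h1
      have h3 := abs_le.mp harg.le
      constructor
      · have := abs_lt.mp harg
        linarith [this.1, h2.1]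
      · linarith [(abs_lt.mp harg).2, h2.2]
    have hlog : Complex.log (Fsym w) = Complex.log w + Complex.log (1 + h) := by
      rw [hFw]
      exact Complex.log_mul hw h1ne hargsum
    set L : ℂ := Complex.log (1 + h) with hL_def
    have hLabs : ‖L‖ ≤ 3/2 * ‖h‖ := by
      have := Complex.norm_log_one_add_half_le_self (z := h)
        (by linarith)
      exact this
    have hcpow : Fsym w ^ (α:ℂ) = w ^ (α:ℂ) * Complex.exp (L * α) := by
      rw [Complex.cpow_def_of_ne_zero hF, Complex.cpow_def_of_ne_zero hw, hlog,
        ← Complex.exp_add]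
      congr 1
      ring
    have hdiff : Fsym w ^ (α:ℂ) - w ^ (α:ℂ) = w ^ (α:ℂ) * (Complex.exp (L * α) - 1) := by
      rw [hcpow]; ring
    rw [hdiff, norm_mul]
    have habs_cpow : ‖(w ^ (α:ℂ))‖ = ‖w‖ ^ α := Complex.norm_cpow_real w α
    have hLα : ‖L * α‖ ≤ 3 * ‖h‖ := by
      rw [norm_mul, Complex.norm_real, Real.norm_eq_abs, _root_.abs_of_nonneg (by linarith : (0:ℝ) ≤ α)]
      nlinarith [norm_nonneg h, norm_nonneg L]
    have hLα1 : ‖L * α‖ ≤ 1 := by nlinarith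
    have hexp : ‖Complex.exp (L * α) - 1‖ ≤ 8 * ‖w‖ ^ 2 := by
      calc ‖Complex.exp (L * α) - 1‖ ≤ 2 * ‖L * α‖ :=
            Complex.norm_exp_sub_one_le hLα1
        _ ≤ 2 * (3 * ‖h‖) := by linarith
        _ ≤ 8 * ‖w‖ ^ 2 := by nlinarith
    rw [habs_cpow]
    have hrpow : ‖w‖ ^ (2 + α) = ‖w‖ ^ (2:ℕ) * ‖w‖ ^ α := by
      rw [Real.rpow_add habsw, show ((2:ℝ)) = ((2:ℕ):ℝ) by norm_num, Real.rpow_natCast]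
    calc ‖w‖ ^ α * ‖Complex.exp (L * α) - 1‖
        ≤ ‖w‖ ^ α * (8 * ‖w‖ ^ 2) := by
          apply mul_le_mul_of_nonneg_left hexp (Real.rpow_nonneg habsw.le α)
      _ ≤ (16 * (Real.exp 11 ^ 2 + 25)) * ‖w‖ ^ (2 + α) := by
          rw [hrpow]
          have : ‖w‖ ^ α * (8 * ‖w‖ ^ 2)
              = 8 * (‖w‖ ^ (2:ℕ) * ‖w‖ ^ α) := by push_cast; ring
          rw [this]
          have hpos : 0 < ‖w‖ ^ (2:ℕ) * ‖w‖ ^ α := by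
            positivity
          nlinarith [hpos]
  · -- large case
    have hFabs : ‖Fsym w‖ ≤ Real.exp 11 := by
      have he : ‖Complex.exp (-w)‖ ≤ Real.exp 5 := by
        rw [Complex.norm_exp]
        apply Real.exp_le_exp.mpr
        calc (-w).re ≤ |(-w).re| := le_abs_self _
          _ ≤ ‖-w‖ := Complex.abs_re_le_norm _
          _ = ‖w‖ := norm_neg w
          _ ≤ 5 := h5
      have e4 : ‖(Complex.exp (-w)) ^ 2 / 2‖
          = ‖Complex.exp (-w)‖ ^ 2 / 2 := by
        rw [norm_div, norm_pow]; norm_num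
      have e5 : ‖2 * Complex.exp (-w)‖ = 2 * ‖Complex.exp (-w)‖ := by
        rw [norm_mul]; norm_num
      have h2 : ‖Fsym w‖ ≤ 3/2 + 2 * Real.exp 5 + Real.exp 5 ^ 2 / 2 := by
        rw [Fsym]
        calc ‖3 / 2 - 2 * Complex.exp (-w) + (Complex.exp (-w)) ^ 2 / 2‖
            ≤ ‖3 / 2 - 2 * Complex.exp (-w)‖ +
                ‖(Complex.exp (-w)) ^ 2 / 2‖ := norm_add_le _ _
          _ ≤ (‖(3/2 : ℂ)‖ + ‖2 * Complex.exp (-w)‖) +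
                ‖(Complex.exp (-w)) ^ 2 / 2‖ := by
              gcongr
              exact norm_sub_le _ _
          _ ≤ 3/2 + 2 * Real.exp 5 + Real.exp 5 ^ 2 / 2 := by
              rw [e4, e5, show ‖(3/2 : ℂ)‖ = 3/2 by norm_num]
              have hnn := norm_nonneg (Complex.exp (-w))
              nlinarith [he]
      have hE1 : (2.7182818283:ℝ) < Real.exp 1 := Real.exp_one_gt_d9
      have hE3 : Real.exp 3 = Real.exp 1 ^ 3 := by
        rw [← Real.exp_nat_mul]; norm_num
      have hE310 : Real.exp 3 ≤ Real.exp 10 := Real.exp_le_exp.mpr (by norm_num)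
      have hE510 : Real.exp 5 ≤ Real.exp 10 := Real.exp_le_exp.mpr (by norm_num)
      have hE11 : Real.exp 11 = Real.exp 1 * Real.exp 10 := by
        rw [← Real.exp_add]; norm_num
      have hE52 : Real.exp 5 ^ 2 = Real.exp 10 := by
        rw [← Real.exp_nat_mul]; norm_num
      rw [hE52] at h2
      have hE1' : (2.7:ℝ) < Real.exp 1 := by linarith
      have h19 : (19:ℝ) ≤ Real.exp 3 := by
        rw [hE3]
        nlinarith [hE1', Real.exp_pos (1:ℝ), sq_nonneg (Real.exp 1 - 2.7)]
      nlinarith [Real.exp_pos (10:ℝ), Real.exp_pos (1:ℝ), h19]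
    -- now the bound
    have hαpos : (0:ℝ) < α := by linarith
    have hFcp : ‖(Fsym w ^ (α:ℂ))‖ = ‖Fsym w‖ ^ α :=
      Complex.norm_cpow_real _ α
    have hwcp : ‖(w ^ (α:ℂ))‖ = ‖w‖ ^ α := Complex.norm_cpow_real w α
    have hFb : ‖Fsym w‖ ^ α ≤ Real.exp 11 ^ 2 := by
      calc ‖Fsym w‖ ^ α ≤ Real.exp 11 ^ α :=
            Real.rpow_le_rpow (norm_nonneg _) hFabs hαpos.le
        _ ≤ Real.exp 11 ^ (2:ℝ) :=
            Real.rpow_le_rpow_of_exponent_le hC26 hα2.le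
        _ = Real.exp 11 ^ 2 := by
            rw [show ((2:ℝ)) = ((2:ℕ):ℝ) by norm_num, Real.rpow_natCast]
    have hwb : ‖w‖ ^ α ≤ 25 := by
      calc ‖w‖ ^ α ≤ (5:ℝ) ^ α :=
            Real.rpow_le_rpow habsw.le h5 hαpos.le
        _ ≤ (5:ℝ) ^ (2:ℝ) := Real.rpow_le_rpow_of_exponent_le (by norm_num) hα2.le
        _ = 25 := by
            rw [show ((2:ℝ)) = ((2:ℕ):ℝ) by norm_num, Real.rpow_natCast]; norm_num
    have hlow : (1:ℝ)/16 ≤ ‖w‖ ^ (2 + α) := by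
      calc (1:ℝ)/16 = (1/2:ℝ) ^ ((4:ℝ)) := by
            rw [show ((4:ℝ)) = ((4:ℕ):ℝ) by norm_num, Real.rpow_natCast]; norm_num
        _ ≤ (1/2:ℝ) ^ (2 + α) :=
            Real.rpow_le_rpow_of_exponent_ge (by norm_num) (by norm_num) (by linarith)
        _ ≤ ‖w‖ ^ (2 + α) :=
            Real.rpow_le_rpow (by norm_num) hlg.le (by linarith)
    have htr : ‖(Fsym w ^ (α:ℂ) - w ^ (α:ℂ))‖
        ≤ Real.exp 11 ^ 2 + 25 := by
      calc ‖(Fsym w ^ (α:ℂ) - w ^ (α:ℂ))‖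
          ≤ ‖(Fsym w ^ (α:ℂ))‖ + ‖(w ^ (α:ℂ))‖ :=
            norm_sub_le _ _
        _ ≤ Real.exp 11 ^ 2 + 25 := by rw [hFcp, hwcp]; linarith
    calc ‖(Fsym w ^ (α:ℂ) - w ^ (α:ℂ))‖ ≤ Real.exp 11 ^ 2 + 25 := htr
      _ = 16 * (Real.exp 11 ^ 2 + 25) * (1/16) := by ring
      _ ≤ 16 * (Real.exp 11 ^ 2 + 25) * ‖w‖ ^ (2 + α) := by
          apply mul_le_mul_of_nonneg_left hlow (by positivity)

lemma Fne {θ : ℝ} (hθ1 : Real.pi / 2 < θ) (hθ2 : θ < Real.pi) {w : ℂ}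
    (hw : w ∈ Dset 1 θ) : Fsym w ≠ 0 := by
  obtain ⟨hw0, hcase⟩ := hw
  intro hzero
  have hfac : (Complex.exp (-w) - 1) * (Complex.exp (-w) - 3) = 0 := by
    have h' : (3:ℂ) / 2 - 2 * Complex.exp (-w) + (Complex.exp (-w)) ^ 2 / 2 = 0 := hzero
    linear_combination 2 * h'
  rcases mul_eq_zero.mp hfac with h1 | h3
  · -- exp(-w) = 1
    have h1' : Complex.exp (-w) = 1 := by linear_combination h1
    obtain ⟨n, hn⟩ := Complex.exp_eq_one_iff.mp h1'
    have hwn : w = -((n:ℂ) * (2 * Real.pi * I)) := by linear_combination -hn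
    have hre : w.re = 0 := by
      rw [hwn]; simp
    have him : w.im = -(n * (2 * Real.pi)) := by
      rw [hwn]; simp [Complex.mul_im]
    have hn0 : n ≠ 0 := by
      intro h
      apply hw0
      rw [hwn, h]; simp
    have hnabs : (1:ℝ) ≤ |(n:ℝ)| := by
      rw [← Int.cast_abs]
      exact_mod_cast Int.one_le_abs hn0
    rcases hcase with ⟨ha, _⟩ | ⟨hb, _⟩
    · -- ray case: |arg w| = θ > π/2 but re w = 0 ≥ 0 gives |arg w| ≤ π/2
      have := Complex.abs_arg_le_pi_div_two_iff.mpr (le_of_eq hre.symm)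
      rw [ha] at this
      linarith
    · -- disk case: |w| ≤ 1 but |im w| = 2π|n| ≥ 2π
      have h2 : |w.im| = 2 * Real.pi * |(n:ℝ)| := by
        rw [him, abs_neg, abs_mul, abs_of_pos (by positivity : (0:ℝ) < 2 * Real.pi)]
        ring
      have h3 : |w.im| ≤ ‖w‖ := Complex.abs_im_le_norm w
      have : (1:ℝ) / 1 = 1 := by norm_num
      rw [this] at hb
      nlinarith [Real.pi_gt_three]
  · -- exp(-w) = 3
    have h3' : Complex.exp (-w) = 3 := by linear_combination h3
    have h3'' : Complex.exp (-w) = Complex.exp ((Real.log 3 : ℝ) : ℂ) := by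
      rw [h3', ← Complex.ofReal_exp, Real.exp_log (by norm_num : (0:ℝ) < 3)]
      norm_num
    obtain ⟨n, hn⟩ := Complex.exp_eq_exp_iff_exists_int.mp h3''
    have hwn : w = -(Real.log 3 : ℂ) - (n:ℂ) * (2 * Real.pi * I) := by
      linear_combination -hn
    have hre : w.re = -Real.log 3 := by
      rw [hwn]; simp [Complex.log_re, Complex.log_im]
    have him : w.im = -(n * (2 * Real.pi)) := by
      rw [hwn]; simp [Complex.log_re, Complex.log_im]
    have hlog3 : (1:ℝ) < Real.log 3 := by
      rw [Real.lt_log_iff_exp_lt (by norm_num : (0:ℝ) < 3)]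
      linarith [Real.exp_one_lt_d9]
    rcases hcase with ⟨ha, hb⟩ | ⟨hb, _⟩
    · -- ray case: |im w| ≤ π forces n = 0, then w is negative real, arg = π
      have h2 : |w.im| = 2 * Real.pi * |(n:ℝ)| := by
        rw [him, abs_neg, abs_mul, abs_of_pos (by positivity : (0:ℝ) < 2 * Real.pi)]
        ring
      have hn0 : n = 0 := by
        by_contra h
        have hnabs : (1:ℝ) ≤ |(n:ℝ)| := by
          rw [← Int.cast_abs]; exact_mod_cast Int.one_le_abs h
        have : Real.pi / 1 = Real.pi := by norm_num
        rw [this] at hb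
        rw [h2] at hb
        nlinarith [Real.pi_pos]
      have hwreal : w = ((-Real.log 3 : ℝ) : ℂ) := by
        apply Complex.ext
        · rw [hre]; simp [Complex.log_re]
        · rw [him, hn0]; simp [Complex.log_im]
      have : w.arg = Real.pi := by
        rw [hwreal]
        exact Complex.arg_ofReal_of_neg (by linarith)
      rw [this] at ha
      rw [abs_of_pos Real.pi_pos] at ha
      linarith
    · -- disk case: |w| ≤ 1 but |re w| = log 3 > 1
      have h3 : |w.re| ≤ ‖w‖ := Complex.abs_re_le_norm w
      rw [hre, abs_neg, abs_of_pos (by linarith : (0:ℝ) < Real.log 3)] at h3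
      have : (1:ℝ) / 1 = 1 := by norm_num
      rw [this] at hb
      linarith

-- |w| ≤ 5 on the region

lemma abs_le_five {θ : ℝ} (hθ1 : Real.pi / 2 < θ) (hθ2 : θ < 3 * Real.pi / 4) {w : ℂ}
    (hw : w ∈ Dset 1 θ) : ‖w‖ ≤ 5 := by
  obtain ⟨hw0, hcase⟩ := hw
  rcases hcase with ⟨ha, hb⟩ | ⟨hb, _⟩
  · have hθpos : 0 < θ := by linarith [Real.pi_pos]
    have hsinθ : Real.sqrt 2 / 2 < Real.sin θ := by
      have h1 : Real.sin θ = Real.sin (Real.pi - θ) := (Real.sin_pi_sub θ).symm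
      rw [h1, ← Real.sin_pi_div_four]
      apply Real.strictMonoOn_sin
      · constructor <;> [linarith [Real.pi_pos]; linarith [Real.pi_pos]]
      · constructor <;> [linarith; linarith]
      · linarith
    have habs : 0 < ‖w‖ := norm_pos_iff.mpr hw0
    have hsa := Complex.sin_arg w
    have hsinpos : 0 < Real.sin θ := by
      have hs2 : (0:ℝ) ≤ Real.sqrt 2 := Real.sqrt_nonneg 2
      linarith
    have himeq : w.im = ‖w‖ * Real.sin w.arg := by
      rw [hsa]; field_simp
    have him : |w.im| = ‖w‖ * Real.sin θ := by
      rcases abs_eq (le_of_lt hθpos) |>.mp ha with h | h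
      · rw [himeq, h, _root_.abs_of_nonneg (by positivity : (0:ℝ) ≤ ‖w‖ * Real.sin θ)]
      · rw [himeq, h, Real.sin_neg, mul_neg, abs_neg,
          _root_.abs_of_nonneg (by positivity : (0:ℝ) ≤ ‖w‖ * Real.sin θ)]
    have hb' : |w.im| ≤ Real.pi := by
      have : Real.pi / 1 = Real.pi := by norm_num
      rwa [this] at hb
    have hs2 : (1.4:ℝ) ≤ Real.sqrt 2 := by
      nlinarith [Real.sq_sqrt (show (0:ℝ) ≤ 2 by norm_num), Real.sqrt_nonneg 2]
    have hsin07 : (0.7:ℝ) < Real.sin θ := by linarith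
    rw [him] at hb'
    nlinarith [Real.pi_lt_d2]
  · have : (1:ℝ) / 1 = 1 := by norm_num
    rw [this] at hb
    linarith

lemma ofReal_mul_cpow {r : ℝ} (hr : 0 < r) {x : ℂ} (hx : x ≠ 0) (s : ℂ) :
    ((r : ℂ) * x) ^ s = (r : ℂ) ^ s * x ^ s := by
  have hr0 : (r : ℂ) ≠ 0 := Complex.ofReal_ne_zero.mpr hr.ne'
  rw [Complex.cpow_def_of_ne_zero (mul_ne_zero hr0 hx), Complex.cpow_def_of_ne_zero hr0,
    Complex.cpow_def_of_ne_zero hx, Complex.log_ofReal_mul hr hx, ← Complex.exp_add,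
    ← Complex.ofReal_log hr.le]
  congr 1
  ring

theorem bdf2_symbol_fractional_power_consistency (α : ℝ) (hα : α ∈ Ioo (1 : ℝ) 2) :
    ∃ θ₀ ∈ Ioo (Real.pi / 2) Real.pi, ∀ θ ∈ Ioo (Real.pi / 2) θ₀,
      ∃ c > (0 : ℝ),
        ∀ τ : ℝ, 0 < τ → ∀ z ∈ Dset τ θ,
          bdf2 τ (Complex.exp (-z * τ)) ≠ 0 ∧
          ‖((bdf2 τ (Complex.exp (-z * τ))) ^ (α : ℂ) - z ^ (α : ℂ))‖ ≤
            c * τ ^ 2 * ‖z‖ ^ (2 + α) := by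
  have hpi := Real.pi_pos
  refine ⟨3 * Real.pi / 4, ⟨by linarith, by linarith⟩, ?_⟩
  intro θ ⟨hθ1, hθ2⟩
  refine ⟨16 * (Real.exp 11 ^ 2 + 25), by positivity, ?_⟩
  intro τ hτ z hz
  obtain ⟨hz0, hzcase⟩ := hz
  set w : ℂ := (τ : ℂ) * z with hw_def
  have hτℂ : (τ : ℂ) ≠ 0 := Complex.ofReal_ne_zero.mpr hτ.ne'
  have hw0 : w ≠ 0 := mul_ne_zero hτℂ hz0
  have hargw : w.arg = z.arg := Complex.arg_real_mul z hτ
  have hwD : w ∈ Dset 1 θ := by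
    refine ⟨hw0, ?_⟩
    rcases hzcase with ⟨ha, hb⟩ | ⟨hb, hc⟩
    · left
      constructor
      · rw [hargw]; exact ha
      · have : w.im = τ * z.im := by
          rw [hw_def]; simp [Complex.mul_im]
        rw [this, abs_mul, _root_.abs_of_pos hτ]
        calc τ * |z.im| ≤ τ * (Real.pi / τ) := by
              exact mul_le_mul_of_nonneg_left hb hτ.le
          _ = Real.pi / 1 := by field_simp
    · right
      constructor
      · have : ‖w‖ = τ * ‖z‖ := by
          rw [hw_def, norm_mul, Complex.norm_real, Real.norm_eq_abs, _root_.abs_of_pos hτ]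
        rw [this]
        calc τ * ‖z‖ ≤ τ * (1 / τ) := mul_le_mul_of_nonneg_left hb hτ.le
          _ = 1 / 1 := by field_simp
      · rw [hargw]; exact hc
  have hθπ : θ < Real.pi := by linarith
  have hFw : Fsym w ≠ 0 := Fne hθ1 hθπ hwD
  have hbdf : bdf2 τ (Complex.exp (-z * τ)) = (τ : ℂ)⁻¹ * Fsym w := by
    have harg : -z * (τ : ℂ) = -w := by rw [hw_def]; ring
    rw [bdf2, harg, Fsym]
  constructor
  · rw [hbdf]
    exact mul_ne_zero (inv_ne_zero hτℂ) hFw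
  · -- the estimate
    have hτinv : (0:ℝ) < τ⁻¹ := by positivity
    have hcast : ((τ:ℂ))⁻¹ = ((τ⁻¹ : ℝ) : ℂ) := by push_cast; ring
    have hzw : z = ((τ⁻¹ : ℝ) : ℂ) * w := by
      rw [hw_def]
      push_cast
      field_simp
    have hδα : (bdf2 τ (Complex.exp (-z * τ))) ^ (α:ℂ)
        = ((τ⁻¹ : ℝ) : ℂ) ^ (α:ℂ) * (Fsym w) ^ (α:ℂ) := by
      rw [hbdf, hcast]
      exact ofReal_mul_cpow hτinv hFw _
    have hzα : z ^ (α:ℂ) = ((τ⁻¹ : ℝ) : ℂ) ^ (α:ℂ) * w ^ (α:ℂ) := by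
      rw [hzw]
      exact ofReal_mul_cpow hτinv hw0 _
    rw [hδα, hzα, ← mul_sub, norm_mul]
    have habsτ : ‖(((τ⁻¹ : ℝ) : ℂ) ^ (α:ℂ))‖ = (τ⁻¹ : ℝ) ^ α := by
      rw [Complex.norm_cpow_real, Complex.norm_real, Real.norm_eq_abs, _root_.abs_of_pos hτinv]
    rw [habsτ]
    have hargwlt : |w.arg| < 3 * Real.pi / 4 := by
      rcases hwD.2 with ⟨ha, _⟩ | ⟨_, hc⟩
      · rw [ha]; linarith
      · exact lt_of_le_of_lt hc hθ2
    have hest := est hα hw0 (abs_le_five hθ1 hθ2 hwD) hargwlt hFw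
    have habsw : ‖w‖ = τ * ‖z‖ := by
      rw [hw_def, norm_mul, Complex.norm_real, Real.norm_eq_abs, _root_.abs_of_pos hτ]
    have hzabs : 0 < ‖z‖ := norm_pos_iff.mpr hz0
    have hfinal : (τ⁻¹ : ℝ) ^ α * ((16 * (Real.exp 11 ^ 2 + 25)) * ‖w‖ ^ (2 + α))
        = 16 * (Real.exp 11 ^ 2 + 25) * τ ^ 2 * ‖z‖ ^ (2 + α) := by
      rw [habsw, Real.mul_rpow hτ.le hzabs.le, Real.inv_rpow hτ.le]
      have h1 : τ ^ (2 + α) = τ ^ (2:ℕ) * τ ^ α := by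
        rw [Real.rpow_add hτ, show ((2:ℝ)) = ((2:ℕ):ℝ) by norm_num, Real.rpow_natCast]
      rw [h1]
      have hτα : (0:ℝ) < τ ^ α := Real.rpow_pos_of_pos hτ α
      field_simp
    calc (τ⁻¹ : ℝ) ^ α * ‖((Fsym w) ^ (α:ℂ) - w ^ (α:ℂ))‖
        ≤ (τ⁻¹ : ℝ) ^ α * ((16 * (Real.exp 11 ^ 2 + 25)) * ‖w‖ ^ (2 + α)) := by
          exact mul_le_mul_of_nonneg_left hest (Real.rpow_nonneg hτinv.le α)
      _ = 16 * (Real.exp 11 ^ 2 + 25) * τ ^ 2 * ‖z‖ ^ (2 + α) := hfinal
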